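/- The inverse limit of the system A = (A_f, p_{fg}, ℕ^ℕ), where A_f = ⊕_{i∈ℕ} ℤ^{f(i)+1} (finitely supported functions on I_f in the first coordinate) with restriction bonding maps, is isomorphic to the group ⊕_{i∈ℕ} ∏_{j∈ℕ} ℤ of functions φ : ℕ×ℕ → ℤ whose support is contained in F × ℕ for some finite F ⊆ ℕ. -/
import Mathlib


/-- `I_f = {(i,j) : j ≤ f(i)}`. -/
def IFun (f : ℕ → ℕ) : Set (ℕ × ℕ) := {p | p.2 ≤ f p.1}

/-- The group of all functions `I_f → ℤ`. -/
abbrev BGrp (f : ℕ → ℕ) : Type := (IFun f) → ℤ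

/-- `A_f = ⊕_i ℤ^{f(i)+1}`: the subgroup of functions `I_f → ℤ` nonzero in only
finitely many first coordinates. -/
def AGrp (f : ℕ → ℕ) : AddSubgroup (BGrp f) where
  carrier := {x | {i : ℕ | ∃ j : ℕ, ∃ h : (i, j) ∈ IFun f, x ⟨(i, j), h⟩ ≠ 0}.Finite}
  zero_mem' := by
    have h : {i : ℕ | ∃ j : ℕ, ∃ h : (i, j) ∈ IFun f, (0 : BGrp f) ⟨(i, j), h⟩ ≠ 0} = ∅ := by
      ext i; simp
    show Set.Finite _
    rw [h]
    exact Set.finite_empty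
  add_mem' := by
    intro a b ha hb
    refine Set.Finite.subset (ha.union hb) ?_
    rintro i ⟨j, h, hne⟩
    by_cases h0 : a ⟨(i, j), h⟩ = 0
    · exact Or.inr ⟨j, h, by simpa [h0] using hne⟩
    · exact Or.inl ⟨j, h, h0⟩
  neg_mem' := by
    intro a ha
    refine Set.Finite.subset ha ?_
    rintro i ⟨j, h, hne⟩
    exact ⟨j, h, by simpa using hne⟩

/-- The bonding map `p_{fg} : B_g → B_f` for `f ≤ g`, given by restriction. -/
def restrictHom (f g : ℕ → ℕ) (h : ∀ i, f i ≤ g i) : BGrp g →+ BGrp f where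
  toFun x p := x ⟨p.1, le_trans (p.2 : p.1.2 ≤ f p.1.1) (h p.1.1)⟩
  map_zero' := rfl
  map_add' _ _ := rfl

/-- The inverse limit `lim A`: compatible threads of elements of the `A_f`. -/
def limA : AddSubgroup (∀ f : ℕ → ℕ, BGrp f) where
  carrier := {x | (∀ (f g : ℕ → ℕ) (h : ∀ i, f i ≤ g i), restrictHom f g h (x g) = x f) ∧
    ∀ f, x f ∈ AGrp f}
  zero_mem' := ⟨fun f g h => map_zero _, fun f => (AGrp f).zero_mem⟩
  add_mem' := by
    rintro a b ⟨ha1, ha2⟩ ⟨hb1, hb2⟩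
    refine ⟨fun f g h => ?_, fun f => (AGrp f).add_mem (ha2 f) (hb2 f)⟩
    simp only [Pi.add_apply, map_add, ha1 f g h, hb1 f g h]
  neg_mem' := by
    rintro a ⟨ha1, ha2⟩
    refine ⟨fun f g h => ?_, fun f => (AGrp f).neg_mem (ha2 f)⟩
    simp only [Pi.neg_apply, map_neg, ha1 f g h]

/-- `⊕_{i∈ℕ} ∏_{j∈ℕ} ℤ`: functions `ℕ×ℕ → ℤ` supported on `F × ℕ` for some finite `F`. -/
def Targ : AddSubgroup (ℕ × ℕ → ℤ) where
  carrier := {φ | {i : ℕ | ∃ j : ℕ, φ (i, j) ≠ 0}.Finite}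
  zero_mem' := by
    have h : {i : ℕ | ∃ j : ℕ, (0 : ℕ × ℕ → ℤ) (i, j) ≠ 0} = ∅ := by
      ext i; simp
    show Set.Finite _
    rw [h]
    exact Set.finite_empty
  add_mem' := by
    intro a b ha hb
    refine Set.Finite.subset (ha.union hb) ?_
    rintro i ⟨j, hne⟩
    by_cases h0 : a (i, j) = 0
    · exact Or.inr ⟨j, by simpa [h0] using hne⟩
    · exact Or.inl ⟨j, h0⟩
  neg_mem' := by
    intro a ha
    refine Set.Finite.subset ha ?_
    rintro i ⟨j, hne⟩
    exact ⟨j, by simpa using hne⟩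

/-- Value of a thread at a point, computed at the constant function. -/
def threadVal (x : limA) (p : ℕ × ℕ) : ℤ :=
  x.1 (fun _ => p.2) ⟨p, le_refl p.2⟩

lemma threadVal_spec (x : limA) (f : ℕ → ℕ) (p : ℕ × ℕ) (hp : p ∈ IFun f) :
    x.1 f ⟨p, hp⟩ = threadVal x p := by
  set g : ℕ → ℕ := fun i => max (f i) p.2 with hg
  have h1 : ∀ i, f i ≤ g i := fun i => le_max_left _ _
  have h2 : ∀ i, (fun _ : ℕ => p.2) i ≤ g i := fun i => le_max_right _ _
  have e1 := congrFun (congrArg (fun z => (z : BGrp f)) (x.2.1 f g h1)) ⟨p, hp⟩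
  have e2 := congrFun (congrArg (fun z => (z : BGrp (fun _ => p.2))) (x.2.1 _ g h2))
    ⟨p, le_refl p.2⟩
  simp only [restrictHom] at e1 e2
  rw [threadVal, ← e1, ← e2]
  rfl

lemma threadVal_mem (x : limA) : threadVal x ∈ Targ := by
  classical
  set g : ℕ → ℕ := fun i => if h : ∃ j, threadVal x (i, j) ≠ 0 then h.choose else 0 with hg
  refine Set.Finite.subset (x.2.2 g) ?_
  rintro i ⟨j, hj⟩
  have hex : ∃ j, threadVal x (i, j) ≠ 0 := ⟨j, hj⟩
  have hgi : g i = hex.choose := by simp [hg, hex]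
  have hmem : (i, hex.choose) ∈ IFun g := by
    simp only [IFun, Set.mem_setOf_eq, hgi]
    exact le_refl _
  refine ⟨hex.choose, hmem, ?_⟩
  rw [threadVal_spec x g (i, hex.choose) hmem]
  exact hex.choose_spec

/-- `lim A ≅ ⊕_{i∈ℕ} ∏_{j∈ℕ} ℤ` as abelian groups. -/
theorem limA_iso_sum_of_prods : Nonempty (limA ≃+ Targ) := by
  refine ⟨{
    toFun := fun x => ⟨threadVal x, threadVal_mem x⟩
    invFun := fun φ => ⟨fun f q => φ.1 q.1, ⟨fun f g h => rfl, fun f => ?_⟩⟩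
    left_inv := fun x => ?_
    right_inv := fun φ => Subtype.ext rfl
    map_add' := fun x y => rfl }⟩
  · refine Set.Finite.subset φ.2 ?_
    rintro i ⟨j, h, hne⟩
    exact ⟨j, hne⟩
  · apply Subtype.ext
    funext f
    funext q
    exact (threadVal_spec x f q.1 q.2).symm
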